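/- arXiv:2501.11386 — 6 statements merged into one kernel-verified Lean document; each statement's English description precedes it below -/
import Mathlib

section
/- There is no sequence of length 6 over the set {1,2,3} that contains every permutation of {1,2,3} as a subsequence; hence the minimum length of a supersequence over a 3-element set is 7. -/
/-- `π` is a permutation of the finite set `A`, viewed as a list listing each
element of `A` exactly once. -/
def IsPermSeq (A : Finset ℕ) (π : List ℕ) : Prop :=
  π.Nodup ∧ π.toFinset = A

/-- `σ` is a supersequence over `A`: a sequence over `A` containing every
permutation of `A` as a subsequence. -/
def IsSupseq (A : Finset ℕ) (σ : List ℕ) : Prop :=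
  (∀ x ∈ σ, x ∈ A) ∧ ∀ π : List ℕ, IsPermSeq A π → π.Sublist σ

/-- `τ` is `k`-complete over `A`: every sequence of `k` distinct letters of `A`
occurs as a subsequence of `τ`. -/
def KComplete (A : Finset ℕ) (k : ℕ) (τ : List ℕ) : Prop :=
  ∀ π : List ℕ, π.Nodup → π.length = k → (∀ x ∈ π, x ∈ A) → π.Sublist τ

/-- `segs` is the segmentation of `σ` over `A`: for each `1 ≤ k ≤ |A|`,
the concatenation of the first `k` segments is the minimum-length initial
substring of `σ` that is `k`-complete. -/
def IsSegmentation (A : Finset ℕ) (σ : List ℕ) (segs : List (List ℕ)) : Prop :=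
  segs.length = A.card ∧ σ = segs.flatten ∧
  ∀ k, 1 ≤ k → k ≤ A.card →
    KComplete A k ((segs.take k).flatten) ∧
    ∀ j < ((segs.take k).flatten).length, ¬ KComplete A k (σ.take j)


lemma key6 : ∀ a ∈ [1,2,3], ∀ b ∈ [1,2,3], ∀ c ∈ [1,2,3], ∀ d ∈ [1,2,3],
    ∀ e ∈ [1,2,3], ∀ f ∈ [1,2,3],
    ¬ ([1,2,3].Sublist [a,b,c,d,e,f] ∧ [1,3,2].Sublist [a,b,c,d,e,f] ∧
       [2,1,3].Sublist [a,b,c,d,e,f] ∧ [2,3,1].Sublist [a,b,c,d,e,f] ∧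
       [3,1,2].Sublist [a,b,c,d,e,f] ∧ ([3,2,1] : List ℕ).Sublist [a,b,c,d,e,f]) := by
  decide

lemma perm_mem : ∀ π : List ℕ, IsPermSeq {1,2,3} π →
    (π = [1,2,3] ∨ π = [1,3,2] ∨ π = [2,1,3] ∨ π = [2,3,1] ∨ π = [3,1,2] ∨ π = [3,2,1]) := by
  rintro π ⟨hnd, hfs⟩
  have hp : π.Perm [1,2,3] := by
    rw [List.perm_ext_iff_of_nodup hnd (by decide)]
    intro a
    rw [← List.mem_toFinset, hfs]
    simp
  obtain ⟨a, b, c, rfl⟩ := List.length_eq_three.1 hp.length_eq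
  have ha : a ∈ [1,2,3] := hp.mem_iff.1 (by simp)
  have hb : b ∈ [1,2,3] := hp.mem_iff.1 (by simp)
  have hc : c ∈ [1,2,3] := hp.mem_iff.1 (by simp)
  fin_cases ha <;> fin_cases hb <;> fin_cases hc <;> revert hnd <;> decide

lemma no6 : ∀ σ : List ℕ, IsSupseq {1,2,3} σ → 7 ≤ σ.length := by
  rintro σ ⟨hmem, hsub⟩
  by_contra h
  push_neg at h
  have hsub' : ∀ π : List ℕ, IsPermSeq {1,2,3} π →
      π.Sublist (σ ++ List.replicate (6 - σ.length) 1) :=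
    fun π hπ => (hsub π hπ).trans (List.sublist_append_left _ _)
  have hmem' : ∀ x ∈ σ ++ List.replicate (6 - σ.length) 1, x ∈ [1,2,3] := by
    intro x hx
    rcases List.mem_append.1 hx with hx | hx
    · have := hmem x hx; simpa using this
    · simp [List.eq_of_mem_replicate hx]
  have hl : (σ ++ List.replicate (6 - σ.length) 1).length = 6 := by
    simp; omega
  obtain ⟨a, b, c, d, e, f, heq⟩ : ∃ a b c d e f,
      σ ++ List.replicate (6 - σ.length) 1 = [a,b,c,d,e,f] := by
    rcases hτ : σ ++ List.replicate (6 - σ.length) 1 with _|⟨a,_|⟨b,_|⟨c,_|⟨d,_|⟨e,_|⟨f,_|⟨g,t⟩⟩⟩⟩⟩⟩⟩ <;>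
      simp_all
  rw [heq] at hsub' hmem'
  refine key6 a (hmem' a (by simp)) b (hmem' b (by simp)) c (hmem' c (by simp))
    d (hmem' d (by simp)) e (hmem' e (by simp)) f (hmem' f (by simp))
    ⟨hsub' _ ⟨by decide, by decide⟩, hsub' _ ⟨by decide, by decide⟩,
     hsub' _ ⟨by decide, by decide⟩, hsub' _ ⟨by decide, by decide⟩,
     hsub' _ ⟨by decide, by decide⟩, hsub' _ ⟨by decide, by decide⟩⟩

/-- No sequence of length 6 is a supersequence over {1,2,3}; hence the minimum
length of a supersequence over a 3-element set is 7. -/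
theorem stmt_1 :
    (¬ ∃ σ : List ℕ, σ.length = 6 ∧ IsSupseq ({1, 2, 3} : Finset ℕ) σ) ∧
    IsLeast {n : ℕ | ∃ σ : List ℕ, IsSupseq ({1, 2, 3} : Finset ℕ) σ ∧ σ.length = n} 7 := by
  have hwit : IsSupseq ({1,2,3} : Finset ℕ) [1,2,3,1,2,1,3] := by
    constructor
    · intro x hx; fin_cases hx <;> decide
    · intro π hπ
      rcases perm_mem π hπ with rfl|rfl|rfl|rfl|rfl|rfl <;> decide
  refine ⟨?_, ⟨[1,2,3,1,2,1,3], hwit, rfl⟩, ?_⟩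
  · rintro ⟨σ, h6, hs⟩
    have := no6 σ hs
    omega
  · rintro n ⟨σ, hs, rfl⟩
    exact no6 σ hs
end

section
/- For any segment σ_k of the segmentation of a minimum-length supersequence σ over a set of size n, the last element of σ_k occurs exactly once in σ_k; that is, the letter σ_k[-1] does not appear earlier within σ_k. -/
/-- In a minimum-length supersequence, the last element of each segment occurs
exactly once in that segment. -/
theorem stmt_7 (A : Finset ℕ) (σ : List ℕ) (segs : List (List ℕ))
    (hσ : IsSupseq A σ)
    (hmin : ∀ τ : List ℕ, IsSupseq A τ → σ.length ≤ τ.length)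
    (hseg : IsSegmentation A σ segs) :
    ∀ s ∈ segs, ∀ h : s ≠ [], s.count (s.getLast h) = 1 := by
  obtain ⟨hlen, hjoin, hK⟩ := hseg
  intro s hs hne
  obtain ⟨⟨i, hi⟩, hget⟩ := List.mem_iff_get.mp hs
  set x := s.getLast hne with hxdef
  by_contra hc
  have hsplit : s = s.dropLast ++ [x] := (List.dropLast_append_getLast hne).symm
  have hcount : s.count x = s.dropLast.count x + 1 := by
    conv_lhs => rw [hsplit]
    simp [List.count_append]
  have hx' : x ∈ s.dropLast := by
    rcases Nat.eq_zero_or_pos (s.dropLast.count x) with h0 | hp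
    · exact absurd (by omega : s.count x = 1) hc
    · exact List.count_pos_iff.mp hp
  have hik : i + 1 ≤ A.card := by omega
  have hgel : segs[i] = s := hget
  have hQ : segs.take (i+1) = segs.take i ++ [s] := by
    rw [List.take_succ, List.getElem?_eq_getElem hi, hgel]
    rfl
  set Q := (segs.take i).flatten with hQdef
  set P := Q ++ s.dropLast with hPdef
  have hT : (segs.take (i+1)).flatten = P ++ [x] := by
    rw [hQ]
    show (segs.take i ++ [s]).flatten = P ++ [x]
    rw [List.flatten_append, List.flatten_cons, List.flatten_nil, List.append_nil,
      hPdef]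
    conv_lhs => rw [hsplit]
    rw [List.append_assoc]
  have hKP : KComplete A (i+1) P := by
    intro π h1 h2 h3
    have hπT : π.Sublist (P ++ [x]) := by
      rw [← hT]
      exact (hK (i+1) (by omega) hik).1 π h1 h2 h3
    obtain ⟨a, b, hab, ha, hb⟩ := List.sublist_append_iff.mp hπT
    rcases List.sublist_singleton.mp hb with hb0 | hb1
    · subst hb0
      rw [List.append_nil] at hab
      exact hab ▸ ha
    · subst hb1
      have halen : a.length = i := by
        have := h2
        rw [hab, List.length_append] at this
        simpa using this
      have haQ : a.Sublist Q := by
        rcases Nat.eq_zero_or_pos i with h0 | hpos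
        · have : a = [] := List.length_eq_zero_iff.mp (by omega)
          simp [this]
        · refine (hK i hpos (by omega)).1 a ?_ halen ?_
          · exact (List.nodup_append.mp (hab ▸ h1)).1
          · intro y hy
            exact h3 y (hab ▸ List.mem_append_left _ hy)
      have hxs : [x].Sublist s.dropLast := List.singleton_sublist.mpr hx'
      rw [hab, hPdef]
      exact List.Sublist.append haQ hxs
  have hσeq : σ = P ++ ([x] ++ (segs.drop (i+1)).flatten) := by
    conv_lhs => rw [hjoin, ← List.take_append_drop (i+1) segs]
    show (segs.take (i+1) ++ segs.drop (i+1)).flatten = _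
    rw [List.flatten_append]
    show (segs.take (i+1)).flatten ++ _ = _
    rw [hT, List.append_assoc]
  have hjlt : P.length < ((segs.take (i+1)).flatten).length := by
    rw [hT]
    simp
  have htake : σ.take P.length = P := by
    rw [hσeq, List.take_left]
  exact (hK (i+1) (by omega) hik).2 P.length hjlt (by rw [htake]; exact hKP)
end

section
/- Let σ be a supersequence over a set A of size n with segmentation σ₁,...,σₙ, and let a be the last appearing letter of A in σ₁ (the letter whose first occurrence in σ₁ is latest). If σ' is obtained from σ by deleting all elements of σ₁ and all occurrences of a, then σ' is a supersequence over A \ {a}. -/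
lemma aux_sub {a : ℕ} {π t L : List ℕ} (hat : a ∉ t) (h : (a :: π).Sublist (t ++ L)) :
    (a :: π).Sublist L := by
  induction t with
  | nil => simpa using h
  | cons x t ih =>
    rw [List.cons_append] at h
    cases h with
    | cons _ h' => exact ih (fun hm => hat (List.mem_cons_of_mem _ hm)) h'
    | cons_cons _ h' => exact absurd List.mem_cons_self hat

lemma indexOf_le_of_getElem {l : List ℕ} {a : ℕ} {i : ℕ} (hi : i < l.length) (h : l[i] = a) :
    l.idxOf a ≤ i := by
  induction l generalizing i with
  | nil => simp at hi
  | cons x l ih =>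
    cases i with
    | zero =>
      simp only [List.getElem_cons_zero] at h
      simp [List.idxOf_cons_eq _ h]
    | succ i =>
      by_cases hx : x = a
      · simp [List.idxOf_cons_eq _ hx]
      · rw [List.idxOf_cons_ne _ hx]
        have := ih (i := i) (by simpa using hi) (by simpa using h)
        omega

lemma mem_take_of_indexOf_lt {l : List ℕ} {b k : ℕ} (hb : b ∈ l) (h : l.idxOf b < k) :
    b ∈ l.take k := by
  have hlt : l.idxOf b < l.length := List.idxOf_lt_length_iff.mpr hb
  have h1 : (l.take k)[l.idxOf b]'(by simp; omega) = l[l.idxOf b] := by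
    simp [List.getElem_take]
  have h2 : l[l.idxOf b] = b := List.getElem_idxOf hlt
  rw [← h2, ← h1]
  exact List.getElem_mem _

/-- Removal operation: deleting the first segment and all occurrences of its
last appearing letter yields a supersequence over `A.erase a`. -/
theorem stmt_8 (A : Finset ℕ) (σ : List ℕ) (s₁ : List ℕ) (rest : List (List ℕ))
    (a : ℕ) (hσ : IsSupseq A σ) (hseg : IsSegmentation A σ (s₁ :: rest))
    (ha : a ∈ A) (hlast : ∀ b ∈ A, s₁.idxOf b ≤ s₁.idxOf a) :
    IsSupseq (A.erase a) ((rest.flatten).filter (· ≠ a)) := by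
  obtain ⟨hmem, hsub⟩ := hσ
  obtain ⟨hlen, hjoin, hks⟩ := hseg
  have hσeq : σ = s₁ ++ rest.flatten := by simpa using hjoin
  have hcard : 1 ≤ A.card := Finset.card_pos.mpr ⟨a, ha⟩
  obtain ⟨hk1, hmin⟩ := hks 1 le_rfl hcard
  have hs1join : ((s₁ :: rest).take 1).flatten = s₁ := by simp
  rw [hs1join] at hk1 hmin
  have hmem1 : ∀ b ∈ A, b ∈ s₁ := by
    intro b hb
    have := hk1 [b] (by simp) (by simp) (by simpa)
    simpa using this
  have has1 : a ∈ s₁ := hmem1 a ha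
  have hlen1 : 1 ≤ s₁.length := List.length_pos_iff.mpr (by rintro rfl; simp at has1)
  have hnot : ¬ KComplete A 1 (σ.take (s₁.length - 1)) := hmin _ (by omega)
  rw [KComplete] at hnot
  push_neg at hnot
  obtain ⟨π₀, hnd, hl, hA0, hns⟩ := hnot
  obtain ⟨b, rfl⟩ : ∃ b, π₀ = [b] := by
    match π₀, hl with | [b], _ => exact ⟨b, rfl⟩
  have hbA : b ∈ A := hA0 b (by simp)
  have hbtake : b ∉ σ.take (s₁.length - 1) := fun h => hns (List.singleton_sublist.mpr h)
  have htake_eq : σ.take (s₁.length - 1) = s₁.take (s₁.length - 1) := by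
    rw [hσeq, List.take_append_of_le_length (by omega)]
  rw [htake_eq] at hbtake
  have hib : s₁.length - 1 ≤ s₁.idxOf b := by
    by_contra h
    push_neg at h
    exact hbtake (mem_take_of_indexOf_lt (hmem1 b hbA) h)
  have hia : s₁.idxOf a = s₁.length - 1 := by
    have h1 : s₁.idxOf a < s₁.length := List.idxOf_lt_length_iff.mpr has1
    have h2 := hlast b hbA
    omega
  have hgeta : s₁[s₁.idxOf a]'(by omega) = a :=
    List.getElem_idxOf (by omega)
  have hdrop : s₁.drop (s₁.idxOf a) = [a] := by
    rw [List.drop_eq_getElem_cons (by omega), hgeta]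
    have : s₁.drop (s₁.idxOf a + 1) = [] := by
      apply List.drop_eq_nil_of_le; omega
    rw [this]
  have hnat : a ∉ s₁.take (s₁.idxOf a) := by
    intro h
    have h2 : a ∈ s₁.take (s₁.idxOf a) := h
    have h3 := List.idxOf_lt_length_iff.mpr h2
    have h4 : s₁.length ≤ s₁.idxOf a + (s₁.length - (s₁.idxOf a)) := by omega
    -- use that take has length ≤ idxOf a
    have h5 : (s₁.take (s₁.idxOf a)).length ≤ s₁.idxOf a := by simp
    -- element of take is element of s₁ at index < idxOf a
    obtain ⟨i, hi, hgi⟩ := List.getElem_of_mem h2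
    rw [List.getElem_take] at hgi
    have : s₁.idxOf a ≤ i := indexOf_le_of_getElem (by simp at hi; omega) hgi
    simp at hi
    omega
  have hσeq2 : σ = s₁.take (s₁.idxOf a) ++ (a :: rest.flatten) := by
    rw [hσeq]
    conv_lhs => rw [← List.take_append_drop (s₁.idxOf a) s₁]
    rw [hdrop]
    simp
  constructor
  · intro x hx
    rw [List.mem_filter] at hx
    obtain ⟨hx1, hx2⟩ := hx
    refine Finset.mem_erase.mpr ⟨by simpa using hx2, hmem (x := x) ?_⟩
    rw [hσeq]
    exact List.mem_append_right _ hx1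
  · intro π hπ
    obtain ⟨hπnd, hπA⟩ := hπ
    have hπa : a ∉ π := by
      intro h
      have : a ∈ A.erase a := hπA ▸ List.mem_toFinset.mpr h
      simp at this
    have hperm : IsPermSeq A (a :: π) := by
      refine ⟨List.nodup_cons.mpr ⟨hπa, hπnd⟩, ?_⟩
      rw [List.toFinset_cons, hπA, Finset.insert_erase ha]
    have hsl := hsub _ hperm
    rw [hσeq2] at hsl
    have hsl2 := aux_sub hnat hsl
    have hsl3 : π.Sublist rest.flatten := (List.cons_sublist_cons.mp hsl2)
    have : π.filter (· ≠ a) = π := by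
      rw [List.filter_eq_self]
      intro x hx
      have : x ∈ A.erase a := hπA ▸ List.mem_toFinset.mpr hx
      simp at this ⊢
      exact this.1
    rw [← this]
    exact List.Sublist.filter _ hsl3
end

section
/- In any minimum-length supersequence over a set of n ≥ 4 letters, the total length of the first four segments of the segmentation is at least 4n − 4. -/
namespace Sup10

/-- If `x :: l` is a sublist of `v ++ w` and `x ∉ v`, then `x :: l <+ w`. -/
lemma lem1 : ∀ {v w : List ℕ} {x : ℕ} {l : List ℕ},
    (x :: l).Sublist (v ++ w) → x ∉ v → (x :: l).Sublist w := by
  intro v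
  induction v with
  | nil => intro w x l h _; simpa using h
  | cons a v ih =>
      intro w x l h hx
      rw [List.cons_append] at h
      cases h with
      | cons _ h' => exact ih h' (fun m => hx (List.mem_cons_of_mem _ m))
      | cons_cons _ h' => exact absurd List.mem_cons_self hx

/-- If `l ++ [x]` is a sublist of `v ++ x :: w`, `x ∉ w` and `x ∉ l`, then `l <+ v`. -/
lemma lem2 {v w : List ℕ} {x : ℕ} {l : List ℕ}
    (h : (l ++ [x]).Sublist (v ++ x :: w)) (hw : x ∉ w) (hl : x ∉ l) : l.Sublist v := by
  have h' := h.reverse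
  rw [List.reverse_append, List.reverse_append] at h'
  simp only [List.reverse_cons, List.reverse_singleton, List.singleton_append] at h'
  -- h' : (x :: l.reverse).Sublist (w.reverse ++ (x :: v.reverse))  (roughly)
  have h2 : (x :: l.reverse).Sublist (w.reverse ++ (x :: v.reverse)) := by
    simpa [List.append_assoc] using h'
  have h3 := lem1 h2 (by simpa using hw)
  have h4 := List.cons_sublist_cons.mp h3
  exact List.reverse_sublist.mp (by simpa using h4)

/-- Greedy cover: if all of `S` occurs in `u`, split `u = v ++ a :: w` where `a ∈ S`
is the last letter of `S` to appear first. -/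
lemma minimalCover : ∀ (u : List ℕ) (S : Finset ℕ), S.Nonempty → (∀ s ∈ S, s ∈ u) →
    ∃ v a w, u = v ++ a :: w ∧ a ∈ S ∧ (∀ s ∈ S, s ∈ v ∨ s = a) ∧ a ∉ v := by
  intro u
  induction u with
  | nil =>
      intro S ⟨s, hs⟩ hmem
      exact absurd (hmem s hs) List.not_mem_nil
  | cons x u ih =>
      intro S hne hmem
      by_cases hS : ∀ s ∈ S, s = x
      · obtain ⟨s, hs⟩ := hne
        refine ⟨[], x, u, rfl, ?_, ?_, by simp⟩
        · have := hS s hs; subst this; exact hs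
        · intro s hs; exact Or.inr (hS s hs)
      · push_neg at hS
        obtain ⟨s₀, hs₀, hs₀x⟩ := hS
        have hne' : (S.erase x).Nonempty := ⟨s₀, Finset.mem_erase.mpr ⟨hs₀x, hs₀⟩⟩
        have hmem' : ∀ s ∈ S.erase x, s ∈ u := by
          intro s hs
          obtain ⟨hsx, hsS⟩ := Finset.mem_erase.mp hs
          rcases List.mem_cons.mp (hmem s hsS) with h | h
          · exact absurd h hsx
          · exact h
        obtain ⟨v', a, w', hu, haS, hcov, hav⟩ := ih (S.erase x) hne' hmem'
        obtain ⟨hax, haS'⟩ := Finset.mem_erase.mp haS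
        refine ⟨x :: v', a, w', by rw [hu]; rfl, haS', ?_, ?_⟩
        · intro s hs
          by_cases hsx : s = x
          · exact Or.inl (by simp [hsx])
          · rcases hcov s (Finset.mem_erase.mpr ⟨hsx, hs⟩) with h | h
            · exact Or.inl (List.mem_cons_of_mem _ h)
            · exact Or.inr h
        · simp only [List.mem_cons, not_or]
          exact ⟨hax, hav⟩

lemma sum_count_append (S : Finset ℕ) (a b : List ℕ) :
    ∑ x ∈ S, (a ++ b).count x = (∑ x ∈ S, a.count x) + ∑ x ∈ S, b.count x := by
  simp [List.count_append, Finset.sum_add_distrib]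

lemma sum_count_le_length (S : Finset ℕ) (u : List ℕ) :
    ∑ x ∈ S, u.count x ≤ u.length := by
  induction u with
  | nil => simp
  | cons c u ih =>
      have : ∀ x ∈ S, (c :: u).count x = u.count x + if c = x then 1 else 0 := by
        intro x _
        simp [List.count_cons, beq_iff_eq]
      rw [Finset.sum_congr rfl this, Finset.sum_add_distrib]
      have h2 : (∑ x ∈ S, if c = x then 1 else 0) ≤ 1 := by
        rw [Finset.sum_ite_eq S c (fun _ => (1:ℕ))]
        split <;> simp
      simp only [List.length_cons]
      omega

lemma card_le_sum_count (S : Finset ℕ) (u : List ℕ) (h : ∀ x ∈ S, x ∈ u) :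
    S.card ≤ ∑ x ∈ S, u.count x := by
  calc S.card = ∑ _x ∈ S, 1 := by simp
  _ ≤ ∑ x ∈ S, u.count x := by
      apply Finset.sum_le_sum
      intro x hx
      exact List.count_pos_iff.mpr (h x hx)

/-- get a nodup list of length k within S containing x -/
lemma mem_of_kcomplete {S : Finset ℕ} {k : ℕ} {u : List ℕ}
    (hk : KComplete S k u) (x : ℕ) (hx : x ∈ S) (hkc : k ≤ S.card) (hk1 : 1 ≤ k) :
    x ∈ u := by
  have h1 : k - 1 ≤ (S.erase x).card := by
    rw [Finset.card_erase_of_mem hx]; omega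
  obtain ⟨t₀, ht₀, ht₀c⟩ := Finset.exists_subset_card_eq h1
  have hxt₀ : x ∉ t₀ := fun h => (Finset.mem_erase.mp (ht₀ h)).1 rfl
  set t : Finset ℕ := insert x t₀ with ht
  have htc : t.card = k := by
    rw [ht, Finset.card_insert_of_notMem hxt₀, ht₀c]; omega
  have hsub : t ⊆ S := Finset.insert_subset hx (ht₀.trans (Finset.erase_subset _ _))
  have hπ := hk t.toList t.nodup_toList (by rw [Finset.length_toList, htc])
    (fun z hz => hsub (Finset.mem_toList.mp hz))
  exact hπ.subset (Finset.mem_toList.mpr (Finset.mem_insert_self x t₀))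

lemma count_pos_of_kcomplete {S : Finset ℕ} {k : ℕ} {u : List ℕ}
    (hk : KComplete S k u) (x : ℕ) (hx : x ∈ S) (hkc : k ≤ S.card) (hk1 : 1 ≤ k) :
    1 ≤ u.count x :=
  List.count_pos_iff.mpr (mem_of_kcomplete hk x hx hkc hk1)

/-- restriction to the left part of a split -/
lemma kc_left {S : Finset ℕ} {k k' : ℕ} {u v w : List ℕ} {x : ℕ}
    (hk : KComplete S k u) (hu : u = v ++ x :: w) (hw : x ∉ w) (hxS : x ∈ S)
    (hkk : k' + 1 = k) : KComplete (S.erase x) k' v := by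
  intro π hnd hlen hmem
  have hxπ : x ∉ π := fun h => (Finset.mem_erase.mp (hmem x h)).1 rfl
  have hnd' : (π ++ [x]).Nodup := by
    rw [List.nodup_append]
    refine ⟨hnd, List.nodup_singleton x, ?_⟩
    intro a ha b hb
    simp only [List.mem_singleton] at hb
    subst hb
    exact fun hax => hxπ (hax ▸ ha)
  have hsub := hk (π ++ [x]) hnd' (by simp [hlen, hkk]) (by
    intro z hz
    rcases List.mem_append.mp hz with h | h
    · exact (Finset.mem_erase.mp (hmem z h)).2
    · simp at h; exact h ▸ hxS)
  rw [hu] at hsub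
  exact lem2 hsub hw hxπ

/-- restriction to the right part of a split -/
lemma kc_right {S : Finset ℕ} {k k' : ℕ} {u v w : List ℕ} {x : ℕ}
    (hk : KComplete S k u) (hu : u = v ++ x :: w) (hv : x ∉ v) (hxS : x ∈ S)
    (hkk : k' + 1 = k) : KComplete (S.erase x) k' w := by
  intro π hnd hlen hmem
  have hxπ : x ∉ π := fun h => (Finset.mem_erase.mp (hmem x h)).1 rfl
  have hnd' : (x :: π).Nodup := List.nodup_cons.mpr ⟨hxπ, hnd⟩
  have hsub := hk (x :: π) hnd' (by simp [hlen]; omega) (by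
    intro z hz
    rcases List.mem_cons.mp hz with h | h
    · exact h ▸ hxS
    · exact (Finset.mem_erase.mp (hmem z h)).2)
  rw [hu] at hsub
  have := lem1 hsub hv
  exact List.cons_sublist_cons.mp this

lemma kc_mono {S S' : Finset ℕ} {k : ℕ} {u : List ℕ} (hss : S' ⊆ S)
    (hk : KComplete S k u) : KComplete S' k u :=
  fun π hnd hlen hmem => hk π hnd hlen (fun x hx => hss (hmem x hx))

/-- `2`-complete over a 2-element set needs total count `≥ 3`. -/
lemma L2 {C : Finset ℕ} {w : List ℕ} (hC : C.card = 2) (hk : KComplete C 2 w) :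
    3 ≤ ∑ x ∈ C, w.count x := by
  obtain ⟨p, q, hpq, rfl⟩ := Finset.card_eq_two.mp hC
  rw [Finset.sum_pair hpq]
  have hp : p ∈ ({p, q} : Finset ℕ) := by simp
  have hq : q ∈ ({p, q} : Finset ℕ) := by simp
  have hcp := count_pos_of_kcomplete hk p hp (le_of_eq hC.symm) (by norm_num)
  have hcq := count_pos_of_kcomplete hk q hq (le_of_eq hC.symm) (by norm_num)
  by_contra hlt
  push_neg at hlt
  have hcp1 : w.count p = 1 := by omega
  have hcq1 : w.count q = 1 := by omega
  -- split at the unique p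
  obtain ⟨s, t, rfl⟩ := List.append_of_mem (List.count_pos_iff.mp (by omega : 0 < w.count p))
  have hcnt : (s ++ p :: t).count p = s.count p + 1 + t.count p := by
    simp [List.count_append, List.count_cons] <;> omega
  have hsp : p ∉ s := by
    rw [← List.count_eq_zero]; omega
  have htp : p ∉ t := by
    rw [← List.count_eq_zero]; omega
  have h1 : ([q, p] : List ℕ).Sublist (s ++ p :: t) :=
    hk [q, p] (by simp [hpq, Ne.symm hpq]) rfl (by intro z hz; simp at hz; rcases hz with h | h <;> simp [h])
  have h2 : ([p, q] : List ℕ).Sublist (s ++ p :: t) :=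
    hk [p, q] (by simp [hpq, Ne.symm hpq]) rfl (by intro z hz; simp at hz; rcases hz with h | h <;> simp [h])
  have hqs : q ∈ s := by
    have := lem2 (l := [q]) (by simpa using h1) htp (by simp [hpq, Ne.symm hpq])
    simpa using this.subset (List.mem_singleton_self q)
  have hqt : q ∈ t := by
    have := lem1 h2 hsp
    have := List.cons_sublist_cons.mp this
    simpa using this.subset (List.mem_singleton_self q)
  have : 2 ≤ (s ++ p :: t).count q := by
    have h1 : 1 ≤ s.count q := List.count_pos_iff.mpr hqs
    have h2 : 1 ≤ t.count q := List.count_pos_iff.mpr hqt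
    simp [List.count_append, List.count_cons]
    omega
  omega

/-- `3`-complete over a 3-element set needs total count `≥ 7`. -/
lemma L3 {B : Finset ℕ} {v : List ℕ} (hB : B.card = 3) (hk : KComplete B 3 v) :
    7 ≤ ∑ x ∈ B, v.count x := by
  have hmem : ∀ x ∈ B, x ∈ v := fun x hx =>
    mem_of_kcomplete hk x hx (le_of_eq hB.symm) (by norm_num)
  by_cases hone : ∃ x ∈ B, v.count x = 1
  · obtain ⟨x, hxB, hx1⟩ := hone
    obtain ⟨s, t, rfl⟩ := List.append_of_mem (hmem x hxB)
    have hcnt : (s ++ x :: t).count x = s.count x + 1 + t.count x := by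
      simp [List.count_append, List.count_cons] <;> omega
    have hsx : x ∉ s := by rw [← List.count_eq_zero]; omega
    have htx : x ∉ t := by rw [← List.count_eq_zero]; omega
    have hcards : (B.erase x).card = 2 := by rw [Finset.card_erase_of_mem hxB, hB]
    have hkl : KComplete (B.erase x) 2 s := kc_left hk rfl htx hxB rfl
    have hkr : KComplete (B.erase x) 2 t := kc_right hk rfl hsx hxB rfl
    have h1 := L2 hcards hkl
    have h2 := L2 hcards hkr
    rw [← Finset.add_sum_erase B _ hxB]
    have heq : ∀ y ∈ B.erase x, (s ++ x :: t).count y = s.count y + t.count y := by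
      intro y hy
      have : y ≠ x := (Finset.mem_erase.mp hy).1
      simp [List.count_append, List.count_cons, this, Ne.symm this]
    rw [Finset.sum_congr rfl heq, Finset.sum_add_distrib]
    omega
  · push_neg at hone
    have htwo : ∀ x ∈ B, 2 ≤ v.count x := by
      intro x hx
      have h1 := List.count_pos_iff.mpr (hmem x hx)
      have := hone x hx
      omega
    -- reverse cover
    have hne : B.Nonempty := Finset.card_pos.mp (by omega)
    obtain ⟨s', b, t', hrev, hbB, hcov, hbs'⟩ :=
      minimalCover v.reverse B hne (fun s hs => List.mem_reverse.mpr (hmem s hs))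
    have hv : v = t'.reverse ++ b :: s'.reverse := by
      have := congrArg List.reverse hrev
      simpa using this
    have hbt : b ∉ s'.reverse := by simpa using hbs'
    have hkl : KComplete (B.erase b) 2 t'.reverse := kc_left hk hv hbt hbB rfl
    have hcards : (B.erase b).card = 2 := by rw [Finset.card_erase_of_mem hbB, hB]
    have h1 := L2 hcards hkl
    have h2 : ∀ y ∈ B.erase b, y ∈ s'.reverse := by
      intro y hy
      obtain ⟨hyb, hyB⟩ := Finset.mem_erase.mp hy
      rcases hcov y hyB with h | h
      · exact List.mem_reverse.mpr h
      · exact absurd h hyb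
    have h3 := card_le_sum_count (B.erase b) s'.reverse h2
    rw [← Finset.add_sum_erase B _ hbB]
    have heq : ∀ y ∈ B.erase b,
        v.count y = t'.reverse.count y + s'.reverse.count y := by
      intro y hy
      have : y ≠ b := (Finset.mem_erase.mp hy).1
      rw [hv]; simp [List.count_append, List.count_cons, this, Ne.symm this]
    rw [Finset.sum_congr rfl heq, Finset.sum_add_distrib]
    have hb2 := htwo b hbB
    rw [hcards] at h3
    omega

/-- Base case: `4`-complete over a 4-element set needs total count `≥ 12`. -/
lemma base4 {A : Finset ℕ} {u : List ℕ} (hA : A.card = 4) (hk : KComplete A 4 u) :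
    12 ≤ ∑ x ∈ A, u.count x := by
  have hmem : ∀ x ∈ A, x ∈ u := fun x hx =>
    mem_of_kcomplete hk x hx (le_of_eq hA.symm) (by norm_num)
  by_cases hone : ∃ x ∈ A, u.count x = 1
  · obtain ⟨x, hxA, hx1⟩ := hone
    obtain ⟨s, t, rfl⟩ := List.append_of_mem (hmem x hxA)
    have hcnt : (s ++ x :: t).count x = s.count x + 1 + t.count x := by
      simp [List.count_append, List.count_cons] <;> omega
    have hsx : x ∉ s := by rw [← List.count_eq_zero]; omega
    have htx : x ∉ t := by rw [← List.count_eq_zero]; omega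
    have hcards : (A.erase x).card = 3 := by rw [Finset.card_erase_of_mem hxA, hA]
    have h1 := L3 hcards (kc_left hk rfl htx hxA rfl)
    have h2 := L3 hcards (kc_right hk rfl hsx hxA rfl)
    rw [← Finset.add_sum_erase A _ hxA]
    have heq : ∀ y ∈ A.erase x, (s ++ x :: t).count y = s.count y + t.count y := by
      intro y hy
      have : y ≠ x := (Finset.mem_erase.mp hy).1
      simp [List.count_append, List.count_cons, this, Ne.symm this]
    rw [Finset.sum_congr rfl heq, Finset.sum_add_distrib]
    omega
  · push_neg at hone
    have htwo : ∀ x ∈ A, 2 ≤ u.count x := by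
      intro x hx
      have h1 := List.count_pos_iff.mpr (hmem x hx)
      have := hone x hx
      omega
    have hne : A.Nonempty := Finset.card_pos.mp (by omega)
    obtain ⟨s', b, t', hrev, hbA, hcov, hbs'⟩ :=
      minimalCover u.reverse A hne (fun s hs => List.mem_reverse.mpr (hmem s hs))
    have hu : u = t'.reverse ++ b :: s'.reverse := by
      have := congrArg List.reverse hrev
      simpa using this
    have hbt : b ∉ s'.reverse := by simpa using hbs'
    have hcards : (A.erase b).card = 3 := by rw [Finset.card_erase_of_mem hbA, hA]
    have h1 := L3 hcards (kc_left hk hu hbt hbA rfl)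
    have h2 : ∀ y ∈ A.erase b, y ∈ s'.reverse := by
      intro y hy
      obtain ⟨hyb, hyA⟩ := Finset.mem_erase.mp hy
      rcases hcov y hyA with h | h
      · exact List.mem_reverse.mpr h
      · exact absurd h hyb
    have h3 := card_le_sum_count (A.erase b) s'.reverse h2
    rw [← Finset.add_sum_erase A _ hbA]
    have heq : ∀ y ∈ A.erase b,
        u.count y = t'.reverse.count y + s'.reverse.count y := by
      intro y hy
      have : y ≠ b := (Finset.mem_erase.mp hy).1
      rw [hu]; simp [List.count_append, List.count_cons, this, Ne.symm this]
    rw [Finset.sum_congr rfl heq, Finset.sum_add_distrib]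
    have hb2 := htwo b hbA
    rw [hcards] at h3
    omega

end Sup10

namespace Sup10

lemma key4 {A : Finset ℕ} {u : List ℕ} (hA : 4 ≤ A.card) (hk : KComplete A 4 u) :
    ∃ y ∈ A, 4 ≤ u.count y := by
  have hmem : ∀ x ∈ A, x ∈ u := fun x hx => mem_of_kcomplete hk x hx hA (by norm_num)
  have hne : A.Nonempty := Finset.card_pos.mp (by omega)
  obtain ⟨v₁, a₁, w₁, hu1, ha1A, hcov1, ha1v⟩ := minimalCover u A hne hmem
  set S₂ := A.erase a₁ with hS₂
  have hS₂c : S₂.card = A.card - 1 := Finset.card_erase_of_mem ha1A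
  have hmem2 : ∀ s ∈ S₂, s ∈ w₁ := by
    intro s hs
    obtain ⟨hsa, hsA⟩ := Finset.mem_erase.mp hs
    have hcard2 : 1 < (S₂.erase s).card := by
      rw [Finset.card_erase_of_mem hs]; omega
    obtain ⟨c, hc, d, hd, hcd⟩ := Finset.one_lt_card.mp hcard2
    obtain ⟨hcs, hcS⟩ := Finset.mem_erase.mp hc
    obtain ⟨hca, hcA⟩ := Finset.mem_erase.mp hcS
    obtain ⟨hds, hdS⟩ := Finset.mem_erase.mp hd
    obtain ⟨hda, hdA⟩ := Finset.mem_erase.mp hdS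
    have hπ : ([a₁, s, c, d] : List ℕ).Sublist u := by
      apply hk _ ?_ (by simp) ?_
      · simp [Ne.symm hsa, Ne.symm hca, Ne.symm hda, Ne.symm hcs, Ne.symm hds, hcd]
      · intro z hz
        simp only [List.mem_cons, List.not_mem_nil, or_false] at hz
        rcases hz with rfl | rfl | rfl | rfl
        · exact ha1A
        · exact hsA
        · exact hcA
        · exact hdA
    rw [hu1] at hπ
    have h2 := List.cons_sublist_cons.mp (lem1 hπ ha1v)
    exact h2.subset (by simp)
  have hne₂ : S₂.Nonempty := Finset.card_pos.mp (by omega)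
  obtain ⟨v₂, a₂, w₂, hw1, ha2S, hcov2, ha2v⟩ := minimalCover w₁ S₂ hne₂ hmem2
  obtain ⟨ha2a1, ha2A⟩ := Finset.mem_erase.mp ha2S
  set S₃ := S₂.erase a₂ with hS₃
  have hS₃c : S₃.card = A.card - 2 := by
    rw [hS₃, Finset.card_erase_of_mem ha2S, hS₂c]
    omega
  have hmem3 : ∀ s ∈ S₃, s ∈ w₂ := by
    intro s hs
    obtain ⟨hsa2, hsS₂⟩ := Finset.mem_erase.mp hs
    obtain ⟨hsa1, hsA⟩ := Finset.mem_erase.mp hsS₂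
    have hcard3 : 0 < (S₃.erase s).card := by
      rw [Finset.card_erase_of_mem hs]; omega
    obtain ⟨d, hd⟩ := Finset.card_pos.mp hcard3
    obtain ⟨hds, hdS₃⟩ := Finset.mem_erase.mp hd
    obtain ⟨hda2, hdS₂⟩ := Finset.mem_erase.mp hdS₃
    obtain ⟨hda1, hdA⟩ := Finset.mem_erase.mp hdS₂
    have hπ : ([a₁, a₂, s, d] : List ℕ).Sublist u := by
      apply hk _ ?_ (by simp) ?_
      · simp [Ne.symm ha2a1, Ne.symm hsa1, Ne.symm hda1, Ne.symm hsa2, Ne.symm hda2, Ne.symm hds]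
      · intro z hz
        simp only [List.mem_cons, List.not_mem_nil, or_false] at hz
        rcases hz with rfl | rfl | rfl | rfl
        · exact ha1A
        · exact ha2A
        · exact hsA
        · exact hdA
    rw [hu1] at hπ
    have h2 := List.cons_sublist_cons.mp (lem1 hπ ha1v)
    rw [hw1] at h2
    have h3 := List.cons_sublist_cons.mp (lem1 h2 ha2v)
    exact h3.subset (by simp)
  have hne₃ : S₃.Nonempty := Finset.card_pos.mp (by omega)
  obtain ⟨v₃, a₃, w₃, hw2, ha3S, hcov3, ha3v⟩ := minimalCover w₂ S₃ hne₃ hmem3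
  obtain ⟨ha3a2, ha3S₂⟩ := Finset.mem_erase.mp ha3S
  obtain ⟨ha3a1, ha3A⟩ := Finset.mem_erase.mp ha3S₂
  have hcard4 : 0 < (S₃.erase a₃).card := by
    rw [Finset.card_erase_of_mem ha3S]; omega
  obtain ⟨y, hy⟩ := Finset.card_pos.mp hcard4
  obtain ⟨hya3, hyS₃⟩ := Finset.mem_erase.mp hy
  obtain ⟨hya2, hyS₂⟩ := Finset.mem_erase.mp hyS₃
  obtain ⟨hya1, hyA⟩ := Finset.mem_erase.mp hyS₂
  refine ⟨y, hyA, ?_⟩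
  -- y occurs in v₁, v₂, v₃, w₃
  have hyv1 : y ∈ v₁ := by
    rcases hcov1 y hyA with h | h
    · exact h
    · exact absurd h hya1
  have hyv2 : y ∈ v₂ := by
    rcases hcov2 y hyS₂ with h | h
    · exact h
    · exact absurd h hya2
  have hyv3 : y ∈ v₃ := by
    rcases hcov3 y hyS₃ with h | h
    · exact h
    · exact absurd h hya3
  have hyw3 : y ∈ w₃ := by
    have hπ : ([a₁, a₂, a₃, y] : List ℕ).Sublist u := by
      apply hk _ ?_ (by simp) ?_
      · simp [Ne.symm ha2a1, Ne.symm ha3a1, Ne.symm hya1, Ne.symm ha3a2, Ne.symm hya2, Ne.symm hya3]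
      · intro z hz
        simp only [List.mem_cons, List.not_mem_nil, or_false] at hz
        rcases hz with rfl | rfl | rfl | rfl
        · exact ha1A
        · exact ha2A
        · exact ha3A
        · exact hyA
    rw [hu1] at hπ
    have h2 := List.cons_sublist_cons.mp (lem1 hπ ha1v)
    rw [hw1] at h2
    have h3 := List.cons_sublist_cons.mp (lem1 h2 ha2v)
    rw [hw2] at h3
    have h4 := List.cons_sublist_cons.mp (lem1 h3 ha3v)
    exact h4.subset (by simp)
  have e1 : u.count y = v₁.count y + w₁.count y := by
    rw [hu1, List.count_append, List.count_cons_of_ne (Ne.symm hya1)]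
  have e2 : w₁.count y = v₂.count y + w₂.count y := by
    rw [hw1, List.count_append, List.count_cons_of_ne (Ne.symm hya2)]
  have e3 : w₂.count y = v₃.count y + w₃.count y := by
    rw [hw2, List.count_append, List.count_cons_of_ne (Ne.symm hya3)]
  have c1 := List.count_pos_iff.mpr hyv1
  have c2 := List.count_pos_iff.mpr hyv2
  have c3 := List.count_pos_iff.mpr hyv3
  have c4 := List.count_pos_iff.mpr hyw3
  omega

lemma main : ∀ (n : ℕ) (A : Finset ℕ) (u : List ℕ), A.card = n → 4 ≤ n →
    KComplete A 4 u → 4 * n - 4 ≤ ∑ x ∈ A, u.count x := by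
  intro n
  induction n using Nat.strong_induction_on with
  | _ n ih =>
    intro A u hcard hn hk
    rcases eq_or_lt_of_le hn with h4 | h5
    · have h12 := base4 (by omega : A.card = 4) hk
      omega
    · obtain ⟨y, hy, hy4⟩ := key4 (by omega) hk
      have hk' := kc_mono (Finset.erase_subset y A) hk
      have hcard' : (A.erase y).card = n - 1 := by
        rw [Finset.card_erase_of_mem hy, hcard]
      have hih := ih (n-1) (by omega) (A.erase y) u hcard' (by omega) hk'
      rw [← Finset.add_sum_erase A _ hy]
      omega

end Sup10

/-- In a minimum-length supersequence over a set of `n ≥ 4` letters, the first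
four segments have total length at least `4n - 4`. -/
theorem stmt_10 (A : Finset ℕ) (σ : List ℕ) (segs : List (List ℕ))
    (hcard : 4 ≤ A.card) (hσ : IsSupseq A σ)
    (hmin : ∀ τ : List ℕ, IsSupseq A τ → σ.length ≤ τ.length)
    (hseg : IsSegmentation A σ segs) :
    4 * A.card - 4 ≤ ((segs.take 4).flatten).length := by
  obtain ⟨hlen, hjoin, hkk⟩ := hseg
  have h4 : KComplete A 4 ((segs.take 4).flatten) := (hkk 4 (by norm_num) hcard).1
  have hm := Sup10.main A.card A ((segs.take 4).flatten) rfl hcard h4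
  have hle := Sup10.sum_count_le_length A ((segs.take 4).flatten)
  omega
end

section
/- In any minimum-length supersequence over a set of 3 letters (length 7), the multiset of letter frequencies is one of {4,2,1}, {3,3,1}, or {3,2,2}. -/
lemma two_orders {b c : ℕ} (hbc : b ≠ c) :
    ∀ σ : List ℕ, [b,c].Sublist σ → [c,b].Sublist σ →
    2 ≤ σ.count b ∨ 2 ≤ σ.count c := by
  intro σ
  induction σ with
  | nil => intro h; simp at h
  | cons d t ih =>
    intro h1 h2
    cases h1 with
    | cons_cons _ h1' =>
      cases h2 with
      | cons_cons _ h2' => exact absurd rfl hbc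
      | cons _ h2' =>
        left
        have hb : b ∈ t := h2'.subset (by simp)
        have := List.count_pos_iff.mpr hb
        rw [List.count_cons_self]
        omega
    | cons _ h1' =>
      cases h2 with
      | cons_cons _ h2' =>
        right
        have hc : c ∈ t := h1'.subset (by simp)
        have := List.count_pos_iff.mpr hc
        rw [List.count_cons_self]
        omega
      | cons _ h2' =>
        rcases ih h1' h2' with h | h
        · left; exact h.trans List.count_le_count_cons
        · right; exact h.trans List.count_le_count_cons

lemma arith (x y z : ℕ) (hs : x + y + z = 7) (hx : 1 ≤ x) (hy : 1 ≤ y) (hz : 1 ≤ z)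
    (hxy : ¬(x = 1 ∧ y = 1)) (hxz : ¬(x = 1 ∧ z = 1)) (hyz : ¬(y = 1 ∧ z = 1)) :
    ({x, y, z} : Multiset ℕ) = {4, 2, 1} ∨
    ({x, y, z} : Multiset ℕ) = {3, 3, 1} ∨
    ({x, y, z} : Multiset ℕ) = {3, 2, 2} := by
  have hx7 : x ≤ 5 := by omega
  have hy7 : y ≤ 5 := by omega
  have hz7 : z ≤ 5 := by omega
  interval_cases x <;> interval_cases y <;> interval_cases z <;>
    first | omega | decide

lemma pair_not_ones {A : Finset ℕ} {σ : List ℕ} (hσ : IsSupseq A σ)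
    {u v w : ℕ} (huv : u ≠ v) (huw : u ≠ w) (hvw : v ≠ w)
    (hA : A = {u, v, w}) : ¬(σ.count u = 1 ∧ σ.count v = 1) := by
  rintro ⟨h1, h2⟩
  have p1 : IsPermSeq A [u, v, w] :=
    ⟨by simp [huv, huw, hvw], by rw [hA]; ext x; simp⟩
  have p2 : IsPermSeq A [v, u, w] :=
    ⟨by simp [huv.symm, huw, hvw], by rw [hA]; ext x; simp; tauto⟩
  have s1 : [u, v].Sublist σ :=
    (List.sublist_append_left [u, v] [w]).trans (hσ.2 _ p1)
  have s2 : [v, u].Sublist σ :=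
    (List.sublist_append_left [v, u] [w]).trans (hσ.2 _ p2)
  rcases two_orders huv σ s1 s2 with h | h <;> omega

/-- In a minimum-length supersequence over 3 letters (length 7), the multiset
of letter frequencies is {4,2,1}, {3,3,1} or {3,2,2}. -/
theorem stmt_14 (A : Finset ℕ) (σ : List ℕ) (hA : A.card = 3)
    (hσ : IsSupseq A σ) (hlen : σ.length = 7) :
    A.val.map (fun a => σ.count a) = ({4, 2, 1} : Multiset ℕ) ∨
    A.val.map (fun a => σ.count a) = ({3, 3, 1} : Multiset ℕ) ∨
    A.val.map (fun a => σ.count a) = ({3, 2, 2} : Multiset ℕ) := by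
  obtain ⟨a, b, c, hab, hac, hbc, hA'⟩ := Finset.card_eq_three.mp hA
  -- every letter of A occurs in σ
  have hmem : ∀ u ∈ A, u ∈ σ := by
    intro u hu
    have hperm : IsPermSeq A A.toList := ⟨A.nodup_toList, A.toList_toFinset⟩
    exact (hσ.2 _ hperm).subset (by simp [hu])
  have hca : 1 ≤ σ.count a := List.count_pos_iff.mpr (hmem a (by simp [hA']))
  have hcb : 1 ≤ σ.count b := List.count_pos_iff.mpr (hmem b (by simp [hA']))
  have hcc : 1 ≤ σ.count c := List.count_pos_iff.mpr (hmem c (by simp [hA']))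
  -- sum of counts is 7
  have h1 : σ.count a + σ.count b + σ.count c = 7 := by
    have hs := Multiset.sum_count_eq_card (s := A) (m := (σ : Multiset ℕ))
      (fun x hx => hσ.1 x (by simpa using hx))
    rw [hA', Finset.sum_insert (by simp [hab, hac]),
        Finset.sum_insert (by simp [hbc]), Finset.sum_singleton] at hs
    simp [Multiset.coe_count] at hs
    omega
  -- no two letters occur exactly once
  have hxy := pair_not_ones hσ hab hac hbc hA'
  have hxz := pair_not_ones hσ hac hab hbc.symm
    (by rw [hA']; ext x; simp; tauto)
  have hyz := pair_not_ones hσ hbc hab.symm hac.symm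
    (by rw [hA']; ext x; simp; tauto)
  have hval : A.val = a ::ₘ b ::ₘ {c} := by
    rw [hA', Finset.insert_val_of_notMem (by simp [hab, hac]),
        Finset.insert_val_of_notMem (by simp [hbc])]
    rfl
  have hgoal : A.val.map (fun a => σ.count a)
      = ({σ.count a, σ.count b, σ.count c} : Multiset ℕ) := by
    rw [hval]; simp [Multiset.insert_eq_cons]
  rw [hgoal]
  exact arith _ _ _ h1 hca hcb hcc hxy hxz hyz
end

section
/- The sequence over {1,...,7} formed by concatenating ⟨1,2,3,4,5,6,7⟩, ⟨1,2,3,4,5,6⟩, ⟨1,7,2,3,4,5⟩, ⟨1,6,2,3,7,4⟩, ⟨1,5,6,2,3⟩, ⟨1,4,7,5,6,2⟩, ⟨3,1,4⟩ is a supersequence over {1,...,7} of length 39 in which the letter 7 occurs exactly 4 times. -/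
private def ok (σ : List ℕ) : Nat → List ℕ → List ℕ → Bool
  | 0, pre, _ => List.isSublist pre σ
  | n+1, pre, rest => rest.all (fun x => ok σ n (pre ++ [x]) (rest.erase x))

private lemma ok_correct (σ : List ℕ) : ∀ n (pre rest : List ℕ), rest.length = n →
    ok σ n pre rest = true → ∀ π : List ℕ, π.Perm rest → (pre ++ π).Sublist σ := by
  intro n
  induction n with
  | zero =>
    intro pre rest hlen hok π hπ
    have : rest = [] := List.eq_nil_of_length_eq_zero hlen
    subst this
    have : π = [] := List.Perm.eq_nil hπ
    subst this
    simpa using (List.isSublist_iff_sublist.mp hok)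
  | succ n ih =>
    intro pre rest hlen hok π hπ
    match π with
    | [] => simp [← hπ.length_eq] at hlen
    | x :: π' =>
      have hx : x ∈ rest := hπ.mem_iff.mp List.mem_cons_self
      have h1 : ok σ n (pre ++ [x]) (rest.erase x) = true :=
        (List.all_eq_true.mp hok) x hx
      have h2 : π'.Perm (rest.erase x) := by
        have := hπ.trans (List.perm_cons_erase hx)
        exact (List.perm_cons x).mp this
      have hlen' : (rest.erase x).length = n := by
        rw [List.length_erase_of_mem hx, hlen]; rfl
      have := ih (pre ++ [x]) (rest.erase x) hlen' h1 π' h2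
      simpa using this

private lemma ok_holds : ok ([1,2,3,4,5,6,7] ++ [1,2,3,4,5,6] ++ [1,7,2,3,4,5] ++ [1,6,2,3,7,4] ++
        [1,5,6,2,3] ++ [1,4,7,5,6,2] ++ [3,1,4]) 7 [] [1,2,3,4,5,6,7] = true := by decide

/-- An explicit length-39 supersequence over {1,...,7} in which the letter 7
occurs exactly 4 times. -/
theorem stmt_16 :
    IsSupseq (Finset.Icc 1 7)
      ([1,2,3,4,5,6,7] ++ [1,2,3,4,5,6] ++ [1,7,2,3,4,5] ++ [1,6,2,3,7,4] ++
        [1,5,6,2,3] ++ [1,4,7,5,6,2] ++ [3,1,4]) ∧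
    ([1,2,3,4,5,6,7] ++ [1,2,3,4,5,6] ++ [1,7,2,3,4,5] ++ [1,6,2,3,7,4] ++
        [1,5,6,2,3] ++ [1,4,7,5,6,2] ++ [3,1,4] : List ℕ).length = 39 ∧
    ([1,2,3,4,5,6,7] ++ [1,2,3,4,5,6] ++ [1,7,2,3,4,5] ++ [1,6,2,3,7,4] ++
        [1,5,6,2,3] ++ [1,4,7,5,6,2] ++ [3,1,4] : List ℕ).count 7 = 4 := by
  refine ⟨⟨by decide, ?_⟩, by decide, by decide⟩
  intro π hπ
  have hperm : π.Perm [1,2,3,4,5,6,7] := by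
    apply List.perm_of_nodup_nodup_toFinset_eq hπ.1 (by decide)
    rw [hπ.2]; decide
  have := ok_correct ([1,2,3,4,5,6,7] ++ [1,2,3,4,5,6] ++ [1,7,2,3,4,5] ++ [1,6,2,3,7,4] ++
        [1,5,6,2,3] ++ [1,4,7,5,6,2] ++ [3,1,4]) 7 [] [1,2,3,4,5,6,7] rfl ok_holds π hperm
  simpa using this
end
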